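/- Let γ ∈ ℝⁿ be dominant, J ⊆ P(γ), and w, w′ ∈ F^{(γ,J)}. Then there exist indices i₁,…,i_m ∈ {1,…,n−1} such that w′ = s_{i_m}⋯s_{i_1} w and, for every 1 ≤ k ≤ m, the partial product s_{i_k}⋯s_{i_1} w lies in F^{(γ,J)} (here sᵢ denotes the transposition (i, i+1)); that is, any two elements of F^{(γ,J)} are connected by a chain of left multiplications by simple transpositions staying inside F^{(γ,J)}. -/

import Mathlib

namespace Stmt14

variable {n : ℕ}

/-- The inversion set `R(w) = {(i,j) : i < j, w i > w j}`. -/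
def invSet (w : Equiv.Perm (Fin n)) : Set (Fin n × Fin n) :=
  {p | p.1 < p.2 ∧ w p.2 < w p.1}

/-- `Z(γ) = {(i,j) : i < j, γ i = γ j}`. -/
def Zset (γ : Fin n → ℝ) : Set (Fin n × Fin n) :=
  {p | p.1 < p.2 ∧ γ p.1 = γ p.2}

/-- `P(γ) = {(i,j) : i < j, γ j = γ i + 1}`. -/
def Pset (γ : Fin n → ℝ) : Set (Fin n × Fin n) :=
  {p | p.1 < p.2 ∧ γ p.2 = γ p.1 + 1}

/-- `F^{(γ,J)} = {w : R(w) ∩ Z(γ) = ∅, R(w) ∩ P(γ) = J}`. -/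
def Fset (γ : Fin n → ℝ) (J : Set (Fin n × Fin n)) : Set (Equiv.Perm (Fin n)) :=
  {w | invSet w ∩ Zset γ = ∅ ∧ invSet w ∩ Pset γ = J}

lemma exists_descent (u : Equiv.Perm (Fin n)) (hu : u ≠ 1) :
    ∃ (i : ℕ) (h : i + 1 < n), u ⟨i + 1, h⟩ < u ⟨i, Nat.lt_of_succ_lt h⟩ := by
  by_contra hcon
  push_neg at hcon
  apply hu
  have hsm : StrictMono u := by
    cases n with
    | zero => intro a b hab; exact absurd a.2 (by omega)
    | succ m =>
      rw [Fin.strictMono_iff_lt_succ]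
      intro i
      have h2 : (i : ℕ) + 1 < m + 1 := by omega
      have hle := hcon i h2
      have hne : u ⟨(i : ℕ), by omega⟩ ≠ u ⟨(i : ℕ) + 1, h2⟩ := by
        intro hh
        have := u.injective hh
        simp [Fin.ext_iff] at this
      have e1 : u (Fin.castSucc i) = u ⟨(i : ℕ), by omega⟩ := by congr 1
      rw [e1]
      have e2 : i.succ = (⟨(i : ℕ) + 1, h2⟩ : Fin (m + 1)) := by simp [Fin.ext_iff]
      rw [e2]
      exact lt_of_le_of_ne hle hne
  have hid : (u : Fin n → Fin n) = id := by
    refine (StrictMono.range_inj hsm strictMono_id).mp ?_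
    simp [Set.range_id, Equiv.range_eq_univ]
  ext x
  have := congrFun hid x
  simp only [id] at this
  simp [this]

lemma swap_lt_of_lt {i : ℕ} (h : i + 1 < n) {u v : Fin n} (huv : u < v)
    (hne : ¬(u = (⟨i, Nat.lt_of_succ_lt h⟩ : Fin n) ∧ v = ⟨i + 1, h⟩)) :
    Equiv.swap (⟨i, Nat.lt_of_succ_lt h⟩ : Fin n) ⟨i + 1, h⟩ u
      < Equiv.swap (⟨i, Nat.lt_of_succ_lt h⟩ : Fin n) ⟨i + 1, h⟩ v := by
  rw [Fin.lt_def] at huv ⊢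
  rw [Equiv.swap_apply_def, Equiv.swap_apply_def]
  simp only [Fin.ext_iff] at hne
  split_ifs <;> simp_all [Fin.ext_iff] <;> omega

lemma lt_of_swap_lt {i : ℕ} (h : i + 1 < n) {u v : Fin n}
    (hlt : Equiv.swap (⟨i, Nat.lt_of_succ_lt h⟩ : Fin n) ⟨i + 1, h⟩ u
      < Equiv.swap (⟨i, Nat.lt_of_succ_lt h⟩ : Fin n) ⟨i + 1, h⟩ v)
    (hne : ¬(u = (⟨i + 1, h⟩ : Fin n) ∧ v = ⟨i, Nat.lt_of_succ_lt h⟩)) : u < v := by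
  set x : Fin n := ⟨i, Nat.lt_of_succ_lt h⟩ with hx
  set y : Fin n := ⟨i + 1, h⟩ with hy
  have key := swap_lt_of_lt h (u := Equiv.swap x y u) (v := Equiv.swap x y v) hlt ?_
  · simpa [hx, hy] using key
  · rintro ⟨h1, h2⟩
    apply hne
    refine ⟨?_, ?_⟩
    · have := congrArg (Equiv.swap x y) h1; simpa [hx, hy] using this
    · have := congrArg (Equiv.swap x y) h2; simpa [hx, hy] using this

lemma exists_step (γ : Fin n → ℝ) (J : Set (Fin n × Fin n))
    (w w' : Equiv.Perm (Fin n)) (hw : w ∈ Fset γ J) (hw' : w' ∈ Fset γ J) (hne : w ≠ w') :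
    ∃ (i : ℕ) (h : i + 1 < n),
      Equiv.swap (⟨i, Nat.lt_of_succ_lt h⟩ : Fin n) ⟨i + 1, h⟩ * w ∈ Fset γ J ∧
      {q : Fin n × Fin n |
          ¬(q ∈ invSet (Equiv.swap (⟨i, Nat.lt_of_succ_lt h⟩ : Fin n) ⟨i + 1, h⟩ * w) ↔ q ∈ invSet w')}.ncard
        < {q : Fin n × Fin n | ¬(q ∈ invSet w ↔ q ∈ invSet w')}.ncard := by
  have hu : w' * w⁻¹ ≠ 1 := by
    intro hh
    apply hne
    have := congrArg (· * w) hh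
    simpa [mul_assoc] using this.symm
  obtain ⟨i, h, hdesc⟩ := exists_descent (w' * w⁻¹) hu
  refine ⟨i, h, ?_⟩
  set x : Fin n := ⟨i, Nat.lt_of_succ_lt h⟩ with hxdef
  set y : Fin n := ⟨i + 1, h⟩ with hydef
  set s : Equiv.Perm (Fin n) := Equiv.swap x y with hsdef
  set a : Fin n := w⁻¹ x with hadef
  set b : Fin n := w⁻¹ y with hbdef
  have hwa : w a = x := w.apply_symm_apply x
  have hwb : w b = y := w.apply_symm_apply y
  have hxy : x < y := by simp [hxdef, hydef, Fin.lt_def]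
  have hab : a ≠ b := by
    intro hh
    rw [hadef, hbdef] at hh
    have := congrArg w hh
    rw [Equiv.Perm.inv_def, w.apply_symm_apply, w.apply_symm_apply] at this
    exact absurd this (ne_of_lt hxy)
  have hw'ab : w' b < w' a := by
    have h1 : (w' * w⁻¹) x = w' a := rfl
    have h2 : (w' * w⁻¹) y = w' b := rfl
    rw [← h1, ← h2]
    exact hdesc
  set p : Fin n × Fin n := if a < b then (a, b) else (b, a) with hpdef
  have hp12 : p.1 < p.2 := by
    rcases lt_or_gt_of_ne hab with hl | hl
    · simp [hpdef, hl]
    · rw [hpdef, if_neg (not_lt.mpr hl.le)]; exact hl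
  have hpw : p ∈ invSet w ↔ ¬ a < b := by
    constructor
    · rintro ⟨-, h2⟩ hl
      rw [hpdef, if_pos hl] at h2
      simp only at h2
      rw [hwa, hwb] at h2
      exact absurd h2 (not_lt.mpr hxy.le)
    · intro hl
      refine ⟨hp12, ?_⟩
      rw [hpdef, if_neg hl]
      simp only
      rw [hwa, hwb]
      exact hxy
  have hpw' : p ∈ invSet w' ↔ a < b := by
    constructor
    · rintro ⟨-, h2⟩
      by_contra hl
      rw [hpdef, if_neg hl] at h2
      simp only at h2
      exact absurd h2 (not_lt.mpr hw'ab.le)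
    · intro hl
      refine ⟨hp12, ?_⟩
      rw [hpdef, if_pos hl]
      exact hw'ab
  -- the toggle: membership in invSet (s*w) agrees with invSet w away from p, flips at p
  have toggle : ∀ q : Fin n × Fin n, q ≠ p → (q ∈ invSet (s * w) ↔ q ∈ invSet w) := by
    intro q hq
    by_cases h12 : q.1 < q.2
    · have hn1 : ¬(w q.2 = x ∧ w q.1 = y) := by
        rintro ⟨e1, e2⟩
        apply hq
        have ha' : q.2 = a := by
          rw [hadef, ← e1, Equiv.Perm.inv_def, w.symm_apply_apply]
        have hb' : q.1 = b := by
          rw [hbdef, ← e2, Equiv.Perm.inv_def, w.symm_apply_apply]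
        have hba : b < a := by rw [← ha', ← hb']; exact h12
        rw [hpdef, if_neg (not_lt.mpr hba.le)]
        exact Prod.ext hb' ha'
      have hn2 : ¬(w q.2 = y ∧ w q.1 = x) := by
        rintro ⟨e1, e2⟩
        apply hq
        have hb' : q.2 = b := by rw [hbdef, ← e1, Equiv.Perm.inv_def, w.symm_apply_apply]
        have ha' : q.1 = a := by rw [hadef, ← e2, Equiv.Perm.inv_def, w.symm_apply_apply]
        have hba : a < b := by rw [← hb', ← ha']; exact h12
        rw [hpdef, if_pos hba]
        exact Prod.ext ha' hb'
      constructor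
      · rintro ⟨-, h2⟩
        refine ⟨h12, ?_⟩
        have h2' : s (w q.2) < s (w q.1) := h2
        refine lt_of_swap_lt h h2' ?_
        rintro ⟨e1, e2⟩
        exact hn2 ⟨e1, e2⟩
      · rintro ⟨-, h2⟩
        refine ⟨h12, ?_⟩
        show s (w q.2) < s (w q.1)
        refine swap_lt_of_lt h h2 ?_
        rintro ⟨e1, e2⟩
        exact hn1 ⟨e1, e2⟩
    · constructor
      · rintro ⟨h1, -⟩; exact absurd h1 h12
      · rintro ⟨h1, -⟩; exact absurd h1 h12
  have togglep : p ∈ invSet (s * w) ↔ ¬ p ∈ invSet w := by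
    rcases lt_or_gt_of_ne hab with hl | hl
    · rw [hpw]
      simp only [hl, not_true_eq_false, not_lt.mpr hl.le, iff_true, not_false_eq_true]
      refine ⟨hp12, ?_⟩
      show s (w p.2) < s (w p.1)
      have e1 : p.1 = a := by simp [hpdef, hl]
      have e2 : p.2 = b := by simp [hpdef, hl]
      rw [e1, e2, hwa, hwb]
      simp [hsdef, Equiv.swap_apply_left, Equiv.swap_apply_right]
      exact hxy
    · rw [hpw]
      simp only [not_lt.mpr hl.le, not_true_eq_false, iff_false, not_not]
      rintro ⟨-, h2⟩
      have e1 : p.1 = b := by rw [hpdef, if_neg (not_lt.mpr hl.le)]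
      have e2 : p.2 = a := by rw [hpdef, if_neg (not_lt.mpr hl.le)]
      have h2' : s (w p.2) < s (w p.1) := h2
      rw [e1, e2, hwa, hwb] at h2'
      simp [hsdef, Equiv.swap_apply_left, Equiv.swap_apply_right] at h2'
      exact absurd h2' (not_lt.mpr hxy.le)
  -- p is in neither Z nor P
  have hpZ : p ∉ Zset γ := by
    intro hpz
    rcases lt_or_gt_of_ne hab with hl | hl
    · have : p ∈ invSet w' ∩ Zset γ := ⟨hpw'.mpr hl, hpz⟩
      rw [hw'.1] at this
      exact this
    · have : p ∈ invSet w ∩ Zset γ := ⟨hpw.mpr (not_lt.mpr hl.le), hpz⟩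
      rw [hw.1] at this
      exact this
  have hpP : p ∉ Pset γ := by
    intro hpp
    rcases lt_or_gt_of_ne hab with hl | hl
    · have hj : p ∈ J := by
        rw [← hw'.2]; exact ⟨hpw'.mpr hl, hpp⟩
      rw [← hw.2] at hj
      exact absurd hl (hpw.mp hj.1)
    · have hj : p ∈ J := by
        rw [← hw.2]; exact ⟨hpw.mpr (not_lt.mpr hl.le), hpp⟩
      rw [← hw'.2] at hj
      exact absurd (hpw'.mp hj.1) (not_lt.mpr hl.le)
  refine ⟨⟨?_, ?_⟩, ?_⟩
  · -- invSet (s*w) ∩ Z = ∅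
    rw [Set.eq_empty_iff_forall_notMem]
    rintro q ⟨hq1, hq2⟩
    have hqp : q ≠ p := fun hh => hpZ (hh ▸ hq2)
    have : q ∈ invSet w ∩ Zset γ := ⟨(toggle q hqp).mp hq1, hq2⟩
    rw [hw.1] at this
    exact this
  · -- invSet (s*w) ∩ P = J
    ext q
    constructor
    · rintro ⟨hq1, hq2⟩
      have hqp : q ≠ p := fun hh => hpP (hh ▸ hq2)
      rw [← hw.2]
      exact ⟨(toggle q hqp).mp hq1, hq2⟩
    · intro hq
      have hq' := hq
      rw [← hw.2] at hq'
      have hqp : q ≠ p := fun hh => hpP (hh ▸ hq'.2)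
      exact ⟨(toggle q hqp).mpr hq'.1, hq'.2⟩
  · -- measure decreases
    apply Set.ncard_lt_ncard
    · constructor
      · intro q hq
        simp only [Set.mem_setOf_eq] at hq ⊢
        rcases eq_or_ne q p with rfl | hqp
        · exfalso
          apply hq
          rw [togglep, hpw, hpw']
          tauto
        · rw [← toggle q hqp]; exact hq
      · intro hsub
        have hpD : p ∈ {q : Fin n × Fin n | ¬(q ∈ invSet w ↔ q ∈ invSet w')} := by
          simp only [Set.mem_setOf_eq, hpw, hpw']
          tauto
        have := hsub hpD
        simp only [Set.mem_setOf_eq, togglep, hpw, hpw'] at this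
        tauto
    · exact Set.toFinite _

/-- Any two elements of `F^{(γ,J)}` are connected by a chain of left multiplications
by adjacent transpositions staying inside `F^{(γ,J)}`.  The list `l` is
`[s_{i_m}, …, s_{i_1}]`, so that the partial products `s_{i_k}⋯s_{i_1} w` are the
products of its suffixes with `w`. -/
theorem stmt14 (γ : Fin n → ℝ) (hdom : Monotone γ)
    (J : Set (Fin n × Fin n)) (hJ : J ⊆ Pset γ)
    (w w' : Equiv.Perm (Fin n)) (hw : w ∈ Fset γ J) (hw' : w' ∈ Fset γ J) :
    ∃ l : List (Equiv.Perm (Fin n)),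
      (∀ s ∈ l, ∃ (i : ℕ) (h : i + 1 < n),
          s = Equiv.swap (⟨i, by omega⟩ : Fin n) ⟨i + 1, h⟩) ∧
      l.prod * w = w' ∧
      (∀ k : ℕ, (l.drop k).prod * w ∈ Fset γ J) := by
  clear hdom hJ
  suffices H : ∀ d (w : Equiv.Perm (Fin n)), w ∈ Fset γ J →
      {q : Fin n × Fin n | ¬(q ∈ invSet w ↔ q ∈ invSet w')}.ncard = d →
      ∃ l : List (Equiv.Perm (Fin n)),
        (∀ s ∈ l, ∃ (i : ℕ) (h : i + 1 < n),
            s = Equiv.swap (⟨i, by omega⟩ : Fin n) ⟨i + 1, h⟩) ∧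
        l.prod * w = w' ∧
        (∀ k : ℕ, (l.drop k).prod * w ∈ Fset γ J) by
    exact H _ w hw rfl
  intro d
  induction d using Nat.strong_induction_on with
  | _ d ih =>
    intro w hw hd
    rcases eq_or_ne w w' with rfl | hne
    · exact ⟨[], by simp, by simp, fun k => by simpa using hw⟩
    · obtain ⟨i, h, hmem, hlt⟩ := exists_step γ J w w' hw hw' hne
      set s : Equiv.Perm (Fin n) := Equiv.swap (⟨i, by omega⟩ : Fin n) ⟨i + 1, h⟩ with hs
      obtain ⟨l, hl1, hl2, hl3⟩ := ih _ (hd ▸ hlt) (s * w) hmem rfl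
      refine ⟨l ++ [s], ?_, ?_, ?_⟩
      · intro t ht
        rcases List.mem_append.mp ht with h1 | h1
        · exact hl1 t h1
        · rcases List.mem_singleton.mp h1 with rfl
          exact ⟨i, h, rfl⟩
      · rw [List.prod_append]
        simpa [mul_assoc] using hl2
      · intro k
        rcases le_or_gt k l.length with hk | hk
        · rw [List.drop_append_of_le_length hk, List.prod_append]
          simpa [mul_assoc] using hl3 k
        · have hnil : (l ++ [s]).drop k = [] := by
            apply List.drop_eq_nil_of_le
            simp
            omega
          rw [hnil]
          simpa using hw

end Stmt14
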